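/- Let h : ℝ^{n₁} × ℝ^{n₂} → ℝ ∪ {+∞} be a proper lower semicontinuous convex function and let N = {x₂ : h^∞(0, x₂) ≤ 0} be a linear subspace. If the infimum inf_{x₂} h(x₁, x₂) is attained at some point, then it is also attained at a point x₂ belonging to the orthogonal complement N^⊥, and the value h(x₁, x₂) is unchanged when x₂ is replaced by its orthogonal projection onto N^⊥. -/

import Mathlib

noncomputable def recFn {E : Type*} [AddCommGroup E] [Module ℝ E]
    (h : E → EReal) (xbar x : E) : EReal :=
  ⨆ l : {l : ℝ // 0 < l}, (((l : ℝ)⁻¹ : ℝ) : EReal) * (h (xbar + (l : ℝ) • x) - h xbar)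

def EConvex {E : Type*} [AddCommGroup E] [Module ℝ E] (h : E → EReal) : Prop :=
  ∀ x y : E, ∀ a b : ℝ, 0 ≤ a → 0 ≤ b → a + b = 1 →
    h (a • x + b • y) ≤ (a : EReal) * h x + (b : EReal) * h y

lemma recFn_le_zero_imp {E : Type*} [AddCommGroup E] [Module ℝ E]
    (h : E → EReal) (pbar : E) (hb : h pbar ≠ ⊤) (hbot : ∀ p, h p ≠ ⊥)
    (d : E) (hrec : recFn h pbar d ≤ 0) :
    ∀ l : ℝ, 0 < l → h (pbar + l • d) ≤ h pbar := by
  intro l hl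
  have hterm : (((l : ℝ)⁻¹ : ℝ) : EReal) * (h (pbar + l • d) - h pbar) ≤ 0 :=
    le_trans (le_iSup (fun m : {m : ℝ // 0 < m} =>
      (((m : ℝ)⁻¹ : ℝ) : EReal) * (h (pbar + (m : ℝ) • d) - h pbar)) ⟨l, hl⟩) hrec
  set b := (h pbar).toReal with hbdef
  have hpb : h pbar = (b : EReal) := (EReal.coe_toReal hb (hbot pbar)).symm
  rcases eq_or_ne (h (pbar + l • d)) ⊤ with hA | hA
  · exfalso
    rw [hA, hpb, EReal.top_sub_coe] at hterm
    rw [EReal.mul_top_of_pos (by exact_mod_cast inv_pos.mpr hl)] at hterm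
    exact absurd hterm (by simp)
  · have hc : h (pbar + l • d) = (((h (pbar + l • d)).toReal : ℝ) : EReal) :=
      (EReal.coe_toReal hA (hbot _)).symm
    set c := (h (pbar + l • d)).toReal
    rw [hc, hpb] at hterm ⊢
    rw [← EReal.coe_sub, ← EReal.coe_mul] at hterm
    have : l⁻¹ * (c - b) ≤ 0 := by exact_mod_cast hterm
    have hcb : c ≤ b := by nlinarith [inv_pos.mpr hl]
    exact_mod_cast hcb

lemma key_step {E : Type*} [NormedAddCommGroup E] [NormedSpace ℝ E]
    (h : E → EReal) (hconv : EConvex h) (hlsc : LowerSemicontinuous h)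
    (hbot : ∀ p, h p ≠ ⊥) (pbar : E) (hb : h pbar ≠ ⊤)
    (d : E) (hd : ∀ l : ℝ, 0 < l → h (pbar + l • d) ≤ h pbar) :
    ∀ x : E, h (x + d) ≤ h x := by
  intro x
  rcases eq_or_ne (h x) ⊤ with hx | hx
  · simp [hx]
  by_contra hlt
  push_neg at hlt
  obtain ⟨y, hy1, hy2⟩ := exists_between hlt
  set a := (h x).toReal with hadef
  set b := (h pbar).toReal with hbdef
  have hxa : h x = (a : EReal) := (EReal.coe_toReal hx (hbot x)).symm
  have hpb : h pbar = (b : EReal) := (EReal.coe_toReal hb (hbot pbar)).symm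
  have hcurve : Filter.Tendsto (fun l : ℝ => x + d + l • (pbar - x)) (nhdsWithin 0 (Set.Ioi 0))
      (nhds (x + d)) := by
    have : Filter.Tendsto (fun l : ℝ => x + d + l • (pbar - x)) (nhds 0) (nhds (x + d)) := by
      have hc : Continuous (fun l : ℝ => x + d + l • (pbar - x)) := by fun_prop
      have := hc.tendsto (0 : ℝ)
      simpa using this
    exact this.mono_left nhdsWithin_le_nhds
  have E2 : ∀ᶠ l : ℝ in nhdsWithin 0 (Set.Ioi 0),
      y < h (x + d + l • (pbar - x)) :=
    hcurve.eventually (hlsc (x + d) y hy2)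
  have E3 : ∀ᶠ l : ℝ in nhdsWithin 0 (Set.Ioi 0),
      (((1 - l) * a + l * b : ℝ) : EReal) < y := by
    have hcont : Filter.Tendsto (fun l : ℝ => (((1 - l) * a + l * b : ℝ) : EReal))
        (nhds 0) (nhds ((a : ℝ) : EReal)) := by
      have h1 : Filter.Tendsto (fun l : ℝ => (1 - l) * a + l * b) (nhds 0) (nhds a) := by
        have hc : Continuous fun l : ℝ => (1 - l) * a + l * b := by fun_prop
        have := hc.tendsto (0 : ℝ)
        simpa using this
      exact (continuous_coe_real_ereal.tendsto a).comp h1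
    have : ∀ᶠ z in nhds ((a : ℝ) : EReal), z < y :=
      Filter.Tendsto.eventually_lt_const ?_ Filter.tendsto_id
    · exact (hcont.mono_left nhdsWithin_le_nhds).eventually this
    · rw [← hxa]; exact hy1
  have E1 : ∀ᶠ l : ℝ in nhdsWithin 0 (Set.Ioi 0), l < 1 :=
    Filter.eventually_iff_exists_mem.mpr ⟨Set.Iio 1, nhdsWithin_le_nhds (Iio_mem_nhds one_pos),
      fun z hz => hz⟩
  have Epos : ∀ᶠ l : ℝ in nhdsWithin 0 (Set.Ioi 0), 0 < l :=
    eventually_nhdsWithin_of_forall (fun z hz => hz)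
  obtain ⟨l, hl2, hl3, hl1, hlpos⟩ := (E2.and (E3.and (E1.and Epos))).exists
  have hq : h (pbar + l⁻¹ • d) ≤ h pbar := hd l⁻¹ (inv_pos.mpr hlpos)
  have hqtop : h (pbar + l⁻¹ • d) ≠ ⊤ := by
    intro hT; rw [hT, hpb] at hq; exact absurd hq (by simp)
  set c := (h (pbar + l⁻¹ • d)).toReal with hcdef
  have hqc : h (pbar + l⁻¹ • d) = (c : EReal) := (EReal.coe_toReal hqtop (hbot _)).symm
  have hcb : c ≤ b := by rw [hqc, hpb] at hq; exact_mod_cast hq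
  have hz : (1 - l) • x + l • (pbar + l⁻¹ • d) = x + d + l • (pbar - x) := by
    have hne : l ≠ 0 := ne_of_gt hlpos
    rw [smul_add, smul_smul, mul_inv_cancel₀ hne, one_smul]
    module
  have hcx := hconv x (pbar + l⁻¹ • d) (1 - l) l (by linarith) (le_of_lt hlpos) (by ring)
  rw [hz, hxa, hqc] at hcx
  rw [← EReal.coe_mul, ← EReal.coe_mul, ← EReal.coe_add] at hcx
  have hle : ((1 - l) * a + l * c : ℝ) ≤ ((1 - l) * a + l * b : ℝ) := by nlinarith
  have : y < y := lt_of_lt_of_le hl2 (le_trans hcx (le_trans (by exact_mod_cast hle) (le_of_lt hl3)))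
  exact lt_irrefl _ this

/-- if `N = {x₂ : h^∞(0,x₂) ≤ 0}` is a linear subspace `W` and the infimum
`inf_{x₂} h(x₁,x₂)` is attained, then it is attained at some `x₂ ∈ W^⊥`, and the value
of `h(x₁,·)` is unchanged under orthogonal projection onto `W^⊥`. -/
theorem stmt3 (n₁ n₂ : ℕ)
    (h : (Fin n₁ → ℝ) × EuclideanSpace ℝ (Fin n₂) → EReal)
    (hconv : EConvex h) (hlsc : LowerSemicontinuous h)
    (hproper : (∀ p, h p ≠ ⊥) ∧ ∃ p, h p ≠ ⊤)
    (pbar : (Fin n₁ → ℝ) × EuclideanSpace ℝ (Fin n₂)) (hpbar : h pbar ≠ ⊤)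
    (W : Submodule ℝ (EuclideanSpace ℝ (Fin n₂)))
    (hN : {x₂ : EuclideanSpace ℝ (Fin n₂) | recFn h pbar (0, x₂) ≤ 0}
        = (W : Set (EuclideanSpace ℝ (Fin n₂))))
    (x₁ : Fin n₁ → ℝ)
    (hatt : ∃ x₂ : EuclideanSpace ℝ (Fin n₂),
      h (x₁, x₂) = ⨅ x₂' : EuclideanSpace ℝ (Fin n₂), h (x₁, x₂')) :
    (∃ x₂ : EuclideanSpace ℝ (Fin n₂), x₂ ∈ Wᗮ ∧
      h (x₁, x₂) = ⨅ x₂' : EuclideanSpace ℝ (Fin n₂), h (x₁, x₂')) ∧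
    (∀ x₂ : EuclideanSpace ℝ (Fin n₂),
      h (x₁, x₂) = h (x₁, (Wᗮ.orthogonalProjectionOnto x₂ : EuclideanSpace ℝ (Fin n₂)))) := by
  obtain ⟨hbot, -⟩ := hproper
  have hmem : ∀ w : EuclideanSpace ℝ (Fin n₂), w ∈ W → recFn h pbar (0, w) ≤ 0 := by
    intro w hw
    have : w ∈ {x₂ : EuclideanSpace ℝ (Fin n₂) | recFn h pbar (0, x₂) ≤ 0} := by
      rw [hN]; exact hw
    exact this
  have hconst : ∀ w : EuclideanSpace ℝ (Fin n₂), w ∈ W →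
      ∀ p : (Fin n₁ → ℝ) × EuclideanSpace ℝ (Fin n₂),
        h (p + ((0 : Fin n₁ → ℝ), w)) = h p := by
    intro w hw p
    have h1 : ∀ x, h (x + ((0 : Fin n₁ → ℝ), w)) ≤ h x :=
      key_step h hconv hlsc hbot pbar hpbar _
        (recFn_le_zero_imp h pbar hpbar hbot _ (hmem w hw))
    have h2 : ∀ x, h (x + ((0 : Fin n₁ → ℝ), -w)) ≤ h x :=
      key_step h hconv hlsc hbot pbar hpbar _
        (recFn_le_zero_imp h pbar hpbar hbot _ (hmem (-w) (neg_mem hw)))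
    refine le_antisymm (h1 p) ?_
    have := h2 (p + ((0 : Fin n₁ → ℝ), w))
    have heq : p + ((0 : Fin n₁ → ℝ), w) + ((0 : Fin n₁ → ℝ), -w) = p := by
      ext <;> simp
    rwa [heq] at this
  have hproj : ∀ x₂ : EuclideanSpace ℝ (Fin n₂),
      h (x₁, x₂) = h (x₁, (Wᗮ.orthogonalProjectionOnto x₂ : EuclideanSpace ℝ (Fin n₂))) := by
    intro x₂
    set p₂ : EuclideanSpace ℝ (Fin n₂) := (Wᗮ.orthogonalProjectionOnto x₂ : EuclideanSpace ℝ (Fin n₂))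
    have hv : x₂ - p₂ ∈ W := by
      have := Submodule.sub_starProjection_mem_orthogonal (K := Wᗮ) x₂
      rwa [Submodule.orthogonal_orthogonal] at this
    have := hconst (x₂ - p₂) hv (x₁, p₂)
    have heq : ((x₁, p₂) : (Fin n₁ → ℝ) × EuclideanSpace ℝ (Fin n₂))
        + ((0 : Fin n₁ → ℝ), x₂ - p₂) = (x₁, x₂) := by
      ext <;> simp
    rw [heq] at this
    exact this
  refine ⟨?_, hproj⟩
  obtain ⟨x₂, hx₂⟩ := hatt
  exact ⟨(Wᗮ.orthogonalProjectionOnto x₂ : EuclideanSpace ℝ (Fin n₂)), Subtype.coe_prop _,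
    by rw [← hproj x₂]; exact hx₂⟩
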